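/- For any positive integer m and polynomial g ∈ Z[X], Σ_{x0=1}^{m} Σ_{y0=1}^{m} gcd(m, g(x0)g(y0)−1) = Σ_{d | m} φ(d)·(m/d)^2·N_{G−1}(d), where N_{G−1}(d) is the number of pairs (z1,z2) modulo d with g(z1)g(z2) ≡ 1 (mod d). -/

import Mathlib

open Finset

-- gcd as sum of totients over common divisors
lemma lemA (m : ℕ) (hm : m ≠ 0) (F : ℤ) :
    Int.gcd (m : ℤ) F = ∑ d ∈ m.divisors.filter (fun d : ℕ => (d : ℤ) ∣ F), Nat.totient d := by
  have h1 : (Nat.gcd m F.natAbs).divisors = m.divisors.filter (fun d : ℕ => (d : ℤ) ∣ F) := by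
    ext d
    simp only [Nat.mem_divisors, Finset.mem_filter, Nat.dvd_gcd_iff, Int.natCast_dvd]
    constructor
    · rintro ⟨⟨h1, h2⟩, -⟩
      exact ⟨⟨h1, hm⟩, h2⟩
    · rintro ⟨⟨h1, h2⟩, h3⟩
      exact ⟨⟨h1, h3⟩, fun h => hm (Nat.gcd_eq_zero_iff.1 h).1⟩
  have h2 : Int.gcd (m : ℤ) F = Nat.gcd m F.natAbs := by
    simp [Int.gcd]
  rw [h2, ← Nat.sum_totient (Nat.gcd m F.natAbs), h1]

-- counting residues in Icc 1 m
lemma lemC2 (m d r : ℕ) (hd : 0 < d) (hdm : d ∣ m) (hr : r < d) :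
    ((Finset.Icc 1 m).filter (fun x => x % d = r)).card = m / d := by
  obtain ⟨k, hk⟩ := hdm
  have hIcc : Finset.Icc 1 m = Finset.Ioc 0 m := Finset.Icc_add_one_left_eq_Ioc 0 m
  have hpred : (Finset.Ioc 0 m).filter (fun x => x % d = r)
      = (Finset.Ioc 0 m).filter (fun x => x ≡ r [MOD d]) :=
    Finset.filter_congr (fun x _ => by simp [Nat.ModEq, Nat.mod_eq_of_lt hr])
  rw [hIcc, hpred]
  have hcard := Nat.Ioc_filter_modEq_card 0 m hd r
  have hfloor : (⌊(((m : ℕ) : ℚ) - (r : ℕ)) / ((d : ℕ) : ℚ)⌋ : ℤ)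
      = ⌊(((0 : ℕ) : ℚ) - (r : ℕ)) / ((d : ℕ) : ℚ)⌋ + (k : ℤ) := by
    have hd' : ((d : ℚ)) ≠ 0 := by positivity
    have : (((m : ℕ) : ℚ) - (r : ℕ)) / ((d : ℕ) : ℚ)
        = (((0 : ℕ) : ℚ) - (r : ℕ)) / ((d : ℕ) : ℚ) + (k : ℚ) := by
      subst hk
      push_cast
      field_simp
      ring
    rw [this, Int.floor_add_natCast]
  have hmd : m / d = k := by subst hk; exact Nat.mul_div_cancel_left k hd
  rw [hmd]
  omega

-- main counting lemma
lemma lemC (m d : ℕ) (hd : 0 < d) (hdm : d ∣ m) (P : ℕ × ℕ → Prop) [DecidablePred P]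
    (hP : ∀ z : ℕ × ℕ, P z ↔ P (z.1 % d, z.2 % d)) :
    ((Finset.Icc 1 m ×ˢ Finset.Icc 1 m).filter P).card
      = (m / d) ^ 2 * (((Finset.range d) ×ˢ (Finset.range d)).filter P).card := by
  have hmap : ∀ z ∈ (Finset.Icc 1 m ×ˢ Finset.Icc 1 m).filter P,
      (z.1 % d, z.2 % d) ∈ ((Finset.range d) ×ˢ (Finset.range d)).filter P := by
    intro z hz
    simp only [Finset.mem_filter, Finset.mem_product, Finset.mem_range] at *
    exact ⟨⟨Nat.mod_lt _ hd, Nat.mod_lt _ hd⟩, (hP z).1 hz.2⟩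
  rw [Finset.card_eq_sum_card_fiberwise hmap]
  have hfiber : ∀ t ∈ ((Finset.range d) ×ˢ (Finset.range d)).filter P,
      (((Finset.Icc 1 m ×ˢ Finset.Icc 1 m).filter P).filter
        (fun z => (z.1 % d, z.2 % d) = t)).card = (m / d) ^ 2 := by
    intro t ht
    simp only [Finset.mem_filter, Finset.mem_product, Finset.mem_range] at ht
    have heq : ((Finset.Icc 1 m ×ˢ Finset.Icc 1 m).filter P).filter
        (fun z => (z.1 % d, z.2 % d) = t)
        = (Finset.Icc 1 m ×ˢ Finset.Icc 1 m).filter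
            (fun z => z.1 % d = t.1 ∧ z.2 % d = t.2) := by
      rw [Finset.filter_filter]
      apply Finset.filter_congr
      intro z hz
      constructor
      · rintro ⟨-, h⟩
        exact ⟨by rw [← h], by rw [← h]⟩
      · rintro ⟨h1, h2⟩
        refine ⟨(hP z).2 ?_, by rw [h1, h2]⟩
        rw [h1, h2]
        exact ht.2
    have hsplit : (Finset.Icc 1 m ×ˢ Finset.Icc 1 m).filter
        (fun z => z.1 % d = t.1 ∧ z.2 % d = t.2)
        = ((Finset.Icc 1 m).filter (fun x => x % d = t.1)) ×ˢ
          ((Finset.Icc 1 m).filter (fun x => x % d = t.2)) := by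
      ext z
      simp only [Finset.mem_filter, Finset.mem_product]
      tauto
    rw [heq, hsplit, Finset.card_product,
      lemC2 m d t.1 hd hdm ht.1.1, lemC2 m d t.2 hd hdm ht.1.2, sq]
  rw [Finset.sum_congr rfl hfiber, Finset.sum_const, smul_eq_mul, mul_comm]

lemma dvd_congr_iff {n a b : ℤ} (h : n ∣ b - a) : (n ∣ a ↔ n ∣ b) :=
  ⟨fun ha => by simpa using dvd_add h ha, fun hb => by simpa using dvd_sub hb h⟩

theorem stmt_15 (m : ℕ) (hm : 1 ≤ m) (g : Polynomial ℤ) :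
    ∑ x0 ∈ Finset.Icc 1 m, ∑ y0 ∈ Finset.Icc 1 m,
        Int.gcd (m : ℤ) (g.eval (x0 : ℤ) * g.eval (y0 : ℤ) - 1) =
      ∑ d ∈ m.divisors, Nat.totient d * (m / d) ^ 2 *
        (((Finset.range d) ×ˢ (Finset.range d)).filter fun z : ℕ × ℕ =>
          (d : ℤ) ∣ (g.eval (z.1 : ℤ) * g.eval (z.2 : ℤ) - 1)).card := by
  have hm0 : m ≠ 0 := by omega
  -- Step 1: rewrite gcd as a totient sum, and combine the double sum into a product sum
  calc
    ∑ x0 ∈ Finset.Icc 1 m, ∑ y0 ∈ Finset.Icc 1 m,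
        Int.gcd (m : ℤ) (g.eval (x0 : ℤ) * g.eval (y0 : ℤ) - 1)
      = ∑ z ∈ Finset.Icc 1 m ×ˢ Finset.Icc 1 m, ∑ d ∈ m.divisors,
          if (d : ℤ) ∣ (g.eval (z.1 : ℤ) * g.eval (z.2 : ℤ) - 1) then Nat.totient d else 0 := by
        rw [Finset.sum_product]
        refine Finset.sum_congr rfl fun x _ => Finset.sum_congr rfl fun y _ => ?_
        rw [lemA m hm0, Finset.sum_filter]
    _ = ∑ d ∈ m.divisors, ∑ z ∈ Finset.Icc 1 m ×ˢ Finset.Icc 1 m,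
          if (d : ℤ) ∣ (g.eval (z.1 : ℤ) * g.eval (z.2 : ℤ) - 1) then Nat.totient d else 0 :=
        Finset.sum_comm
    _ = ∑ d ∈ m.divisors, Nat.totient d *
          ((Finset.Icc 1 m ×ˢ Finset.Icc 1 m).filter (fun z : ℕ × ℕ =>
            (d : ℤ) ∣ (g.eval (z.1 : ℤ) * g.eval (z.2 : ℤ) - 1))).card := by
        refine Finset.sum_congr rfl fun d _ => ?_
        rw [← Finset.sum_filter, Finset.sum_const, smul_eq_mul, mul_comm]
    _ = ∑ d ∈ m.divisors, Nat.totient d * (m / d) ^ 2 *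
          (((Finset.range d) ×ˢ (Finset.range d)).filter fun z : ℕ × ℕ =>
            (d : ℤ) ∣ (g.eval (z.1 : ℤ) * g.eval (z.2 : ℤ) - 1)).card := by
        refine Finset.sum_congr rfl fun d hd => ?_
        rw [Nat.mem_divisors] at hd
        have hd0 : 0 < d := Nat.pos_of_mem_divisors (by rw [Nat.mem_divisors]; exact hd)
        rw [lemC m d hd0 hd.1 _ ?_, mul_assoc]
        intro z
        apply dvd_congr_iff
        have key : ∀ x : ℕ, (d : ℤ) ∣ g.eval ((x % d : ℕ) : ℤ) - g.eval (x : ℤ) := by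
          intro x
          refine dvd_trans ?_ (Polynomial.sub_dvd_eval_sub _ _ g)
          have hmd : ((x % d : ℕ) : ℤ) + (d : ℤ) * ((x / d : ℕ) : ℤ) = (x : ℤ) := by
            exact_mod_cast Nat.mod_add_div x d
          have : ((x % d : ℕ) : ℤ) - (x : ℤ) = -((d : ℤ) * ((x / d : ℕ) : ℤ)) := by linarith
          rw [this]
          exact dvd_neg.mpr (dvd_mul_right _ _)
        have h1 := key z.1
        have h2 := key z.2
        have : g.eval ((z.1 % d : ℕ) : ℤ) * g.eval ((z.2 % d : ℕ) : ℤ) - 1 -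
            (g.eval (z.1 : ℤ) * g.eval (z.2 : ℤ) - 1)
            = (g.eval ((z.1 % d : ℕ) : ℤ) - g.eval (z.1 : ℤ)) * g.eval ((z.2 % d : ℕ) : ℤ)
              + g.eval (z.1 : ℤ) * (g.eval ((z.2 % d : ℕ) : ℤ) - g.eval (z.2 : ℤ)) := by ring
        rw [this]
        exact dvd_add (h1.mul_right _) (h2.mul_left _)
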